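/- Let H > 0 and let f : [0,H] → ℝ be twice continuously differentiable with f'(0) = f'(H) = 0. Then ∫₀^H |f'(z)|³ dz ≤ 2 ∫₀^H |f(z)| |f''(z)| |f'(z)| dz. -/

import Mathlib

open intervalIntegral Filter Topology

lemma hasDerivAt_mul_abs (x : ℝ) : HasDerivAt (fun y : ℝ => y * |y|) (2 * |x|) x := by
  rcases lt_trichotomy x 0 with hx | hx | hx
  · have h : HasDerivAt (fun y : ℝ => -(y * y)) (2 * |x|) x := by
      have := ((hasDerivAt_id' x).mul (hasDerivAt_id' x)).neg
      simpa [abs_of_neg hx, two_mul, Pi.mul_def, Pi.neg_def] using this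
    refine h.congr_of_eventuallyEq ?_
    filter_upwards [Iio_mem_nhds hx] with y hy
    rw [abs_of_neg hy]; ring
  · subst hx
    rw [hasDerivAt_iff_tendsto_slope]
    have h : Tendsto (fun y : ℝ => |y|) (𝓝[≠] (0:ℝ)) (𝓝 0) := by
      simpa using (continuous_abs.tendsto (0:ℝ)).mono_left nhdsWithin_le_nhds
    simp only [abs_zero, mul_zero]
    refine h.congr' ?_
    filter_upwards [self_mem_nhdsWithin] with y hy
    have hy' : y ≠ 0 := hy
    rw [slope_def_field]
    field_simp; simp
  · have h : HasDerivAt (fun y : ℝ => y * y) (2 * |x|) x := by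
      have := (hasDerivAt_id' x).mul (hasDerivAt_id' x)
      simpa [abs_of_pos hx, two_mul, Pi.mul_def] using this
    refine h.congr_of_eventuallyEq ?_
    filter_upwards [Ioi_mem_nhds hx] with y hy
    rw [abs_of_pos hy]

/-- (AppAp2): 1-D integration-by-parts inequality with Neumann boundary conditions:
∫₀^H |f'|³ ≤ 2 ∫₀^H |f| |f''| |f'|. -/
theorem one_dim_ibp_inequality (H : ℝ) (hH : 0 < H) (f : ℝ → ℝ)
    (hf : ContDiff ℝ 2 f) (h0 : deriv f 0 = 0) (hHbc : deriv f H = 0) :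
    ∫ z in (0:ℝ)..H, |deriv f z|^3
      ≤ 2 * ∫ z in (0:ℝ)..H, |f z| * |deriv (deriv f) z| * |deriv f z| := by
  have hf2 : ContDiff ℝ ((1:WithTop ℕ∞) + 1) f := by exact_mod_cast hf
  have hf1 : ContDiff ℝ 1 (deriv f) := (contDiff_succ_iff_deriv.mp hf2).2.2
  have hdf : Differentiable ℝ f := (contDiff_succ_iff_deriv.mp hf2).1
  have hdf' : Differentiable ℝ (deriv f) := hf1.differentiable one_ne_zero
  have hcf : Continuous f := hdf.continuous
  have hcf' : Continuous (deriv f) := hdf'.continuous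
  have hcf'' : Continuous (deriv (deriv f)) := hf1.continuous_deriv le_rfl
  -- IBP with u = f, v = f' |f'|
  set v : ℝ → ℝ := fun y => deriv f y * |deriv f y| with hv
  set v' : ℝ → ℝ := fun y => 2 * |deriv f y| * deriv (deriv f) y with hv'
  have hvd : ∀ x ∈ Set.uIcc (0:ℝ) H, HasDerivAt v (v' x) x := by
    intro x _
    have h1 : HasDerivAt (deriv f) (deriv (deriv f) x) x := (hdf' x).hasDerivAt
    have := (hasDerivAt_mul_abs (deriv f x)).comp x h1
    simpa [v, v', mul_comm, mul_assoc, Function.comp_def] using this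
  have hud : ∀ x ∈ Set.uIcc (0:ℝ) H, HasDerivAt f (deriv f x) x := fun x _ =>
    (hdf x).hasDerivAt
  have hint1 : IntervalIntegrable (deriv f) MeasureTheory.volume 0 H :=
    hcf'.intervalIntegrable _ _
  have hint2 : IntervalIntegrable v' MeasureTheory.volume 0 H := by
    exact (((continuous_const.mul hcf'.abs).mul hcf'')).intervalIntegrable _ _
  have ibp := integral_mul_deriv_eq_deriv_mul hud hvd hint1 hint2
  -- ibp : ∫ f * v' = f H * v H - f 0 * v 0 - ∫ (deriv f) * v
  have hb : f H * v H - f 0 * v 0 = 0 := by simp [v, h0, hHbc]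
  rw [hb, zero_sub] at ibp
  have hcube : ∀ z : ℝ, deriv f z * v z = |deriv f z|^3 := by
    intro z
    simp only [v]
    rw [pow_succ, sq_abs]; ring
  have key : ∫ z in (0:ℝ)..H, |deriv f z|^3 = - ∫ z in (0:ℝ)..H, f z * v' z := by
    rw [ibp, neg_neg]
    exact integral_congr fun z _ => (hcube z).symm
  rw [key, ← integral_neg, ← integral_const_mul]
  apply integral_mono_on hH.le
  · exact ((hcf.mul ((continuous_const.mul hcf'.abs).mul hcf'')).neg).intervalIntegrable _ _
  · exact (continuous_const.mul ((hcf.abs.mul hcf''.abs).mul hcf'.abs)).intervalIntegrable _ _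
  · intro z _
    have h1 : -(f z * v' z) ≤ |f z * v' z| := neg_le_abs _
    refine h1.trans (le_of_eq ?_)
    simp only [v', abs_mul, abs_abs, abs_two]
    ring
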